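/- Over F_2, under the Frobenius filtration f_t of the symmetric algebra S*(W), each Milnor derivation Q_i is a Φ S*(W)-module map that decreases filtration by exactly one: Q_i(f_t S*(W)) ⊆ f_{t-1} S*(W), and the induced map on filtration quotients Λ^t(W)⊗S*(W) → Λ^{t-1}(W)⊗S*(W) is the Koszul differential τ_i. -/

import Mathlib

open MvPolynomial

/-- The Milnor derivation `Q_i` on the symmetric (polynomial) algebra over `𝔽₂`. -/
noncomputable def Qder (σ : Type) (i : ℕ) :
    Derivation (ZMod 2) (MvPolynomial σ (ZMod 2)) (MvPolynomial σ (ZMod 2)) :=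
  MvPolynomial.mkDerivation (ZMod 2) (fun s => X s ^ 2 ^ (i + 1))

/-- The Frobenius filtration `f_t S^*(W)`: the span of products `m · g²` with `m` homogeneous
of degree at most `t`. -/
noncomputable def frobFilt (σ : Type) (t : ℕ) :
    Submodule (ZMod 2) (MvPolynomial σ (ZMod 2)) :=
  Submodule.span (ZMod 2) {p | ∃ u ≤ t, ∃ m g : MvPolynomial σ (ZMod 2),
    m.IsHomogeneous u ∧ p = m * g ^ 2}

/-- The predecessor filtration stage, with `f_{-1} = 0`. -/
noncomputable def frobFiltPred (σ : Type) : ℕ → Submodule (ZMod 2) (MvPolynomial σ (ZMod 2))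
  | 0 => ⊥
  | (t + 1) => frobFilt σ t

namespace Stmt14Aux

set_option linter.unusedSectionVars false

variable {σ : Type} [DecidableEq σ] {i : ℕ}

lemma Q_sq (g : MvPolynomial σ (ZMod 2)) : Qder σ i (g ^ 2) = 0 := by
  rw [pow_two, Derivation.leibniz, smul_eq_mul]
  exact CharTwo.add_self_eq_zero _

lemma Q_sq_mul (g p : MvPolynomial σ (ZMod 2)) :
    Qder σ i (g ^ 2 * p) = g ^ 2 * Qder σ i p := by
  rw [Derivation.leibniz, Q_sq, smul_zero, add_zero, smul_eq_mul]

lemma Q_X (s : σ) : Qder σ i (X s) = X s ^ 2 ^ (i + 1) :=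
  MvPolynomial.mkDerivation_X _ _ _

lemma Q_hom0 {m : MvPolynomial σ (ZMod 2)} (hm : m.IsHomogeneous 0) :
    Qder σ i m = 0 := by
  have h := (totalDegree_eq_zero_iff σ m).mp
    ((totalDegree_zero_iff_isHomogeneous (σ:=σ)).mpr hm)
  conv_lhs => rw [m.as_sum]
  rw [map_sum]
  refine Finset.sum_eq_zero fun v hv => ?_
  have hv0 : v = 0 := Finsupp.ext fun s => h v hv s
  rw [hv0, monomial_zero', ← MvPolynomial.algebraMap_eq, Derivation.map_algebraMap]

/-- Exact-degree piece of the filtration. -/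
noncomputable def E (σ : Type) (u : ℕ) : Submodule (ZMod 2) (MvPolynomial σ (ZMod 2)) :=
  Submodule.span (ZMod 2) {p | ∃ m g : MvPolynomial σ (ZMod 2),
    m.IsHomogeneous u ∧ p = m * g ^ 2}

lemma X_mul_mem_E {u : ℕ} (s : σ) {p : MvPolynomial σ (ZMod 2)} (hp : p ∈ E σ u) :
    X s * p ∈ E σ (u + 1) := by
  induction hp using Submodule.span_induction with
  | mem q hq =>
    obtain ⟨m, g, hm, rfl⟩ := hq
    refine Submodule.subset_span ⟨X s * m, g, ?_, by ring⟩
    simpa [add_comm] using (isHomogeneous_X (ZMod 2) s).mul hm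
  | zero => simp
  | add q r _ _ hq hr => rw [mul_add]; exact add_mem hq hr
  | smul c q _ hq => rw [mul_smul_comm]; exact Submodule.smul_mem _ _ hq

lemma sq_mul_mem_frob {w t : ℕ} (hwt : w ≤ t) (g : MvPolynomial σ (ZMod 2))
    {p : MvPolynomial σ (ZMod 2)} (hp : p ∈ E σ w) : g ^ 2 * p ∈ frobFilt σ t := by
  induction hp using Submodule.span_induction with
  | mem q hq =>
    obtain ⟨m, h, hm, rfl⟩ := hq
    exact Submodule.subset_span ⟨w, hwt, m, g * h, hm, by ring⟩
  | zero => simp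
  | add q r _ _ hq hr => rw [mul_add]; exact add_mem hq hr
  | smul c q _ hq => rw [mul_smul_comm]; exact Submodule.smul_mem _ _ hq

lemma Q_hom_succ : ∀ u : ℕ, ∀ m : MvPolynomial σ (ZMod 2),
    m.IsHomogeneous (u + 1) → Qder σ i m ∈ E σ u := by
  intro u
  induction u with
  | zero =>
    intro m hm
    rw [m.as_sum, map_sum]
    refine Submodule.sum_mem _ fun v hv => ?_
    have hdeg : v.degree = 1 := by
      by_contra h
      exact (mem_support_iff.mp hv) (hm.coeff_eq_zero h)
    obtain ⟨s, hs⟩ : ∃ s, v s ≠ 0 := by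
      by_contra h
      push_neg at h
      have hv0 : v = 0 := Finsupp.ext fun s => h s
      rw [hv0, map_zero] at hdeg
      exact one_ne_zero hdeg.symm
    have hv1 : v = Finsupp.single s 1 := by
      ext u
      have hle := Finsupp.le_degree u v
      have hles := Finsupp.le_degree s v
      rw [hdeg] at hle hles
      rcases eq_or_ne u s with rfl | hus
      · simp; omega
      · rw [Finsupp.single_apply, if_neg (Ne.symm hus)]
        by_contra h
        have hu : u ∈ v.support := by
          rw [Finsupp.mem_support_iff]; omega
        have hsm : s ∈ v.support := Finsupp.mem_support_iff.mpr hs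
        have h2 : 2 ≤ v.degree := by
          rw [Finsupp.degree]
          calc 2 = 1 + 1 := rfl
          _ ≤ v u + v s := by omega
          _ ≤ ∑ x ∈ v.support, v x := by
              rw [← Finset.sum_pair hus]
              exact Finset.sum_le_sum_of_subset (by
                intro x hx
                simp only [Finset.mem_insert, Finset.mem_singleton] at hx
                rcases hx with rfl | rfl <;> assumption)
        rw [hdeg] at h2; omega
    have key : ∀ c : ZMod 2, (monomial (Finsupp.single s 1)) c = C c * X s := by
      intro c
      rw [show (X s : MvPolynomial σ (ZMod 2)) = monomial (Finsupp.single s 1) 1 from rfl,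
        C_mul_monomial, mul_one]
    rw [hv1, key, Derivation.leibniz, smul_eq_mul, smul_eq_mul,
      ← MvPolynomial.algebraMap_eq, Derivation.map_algebraMap, mul_zero, add_zero,
      Q_X]
    refine Submodule.subset_span ⟨C (coeff (Finsupp.single s 1) m), X s ^ 2 ^ i, isHomogeneous_C _ _, ?_⟩
    rw [← pow_mul, ← pow_succ, MvPolynomial.algebraMap_eq]
  | succ w ih =>
    intro m hm
    rw [m.as_sum, map_sum]
    refine Submodule.sum_mem _ fun v hv => ?_
    have hdeg : v.degree = w + 1 + 1 := by
      by_contra h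
      exact (mem_support_iff.mp hv) (hm.coeff_eq_zero h)
    obtain ⟨s, hs⟩ : ∃ s, v s ≠ 0 := by
      by_contra h
      push_neg at h
      have hv0 : v = 0 := Finsupp.ext fun s => h s
      rw [hv0, map_zero] at hdeg
      omega
    set v' := v - Finsupp.single s 1 with hv'
    have hsplit : Finsupp.single s 1 + v' = v := by
      ext u
      simp only [Finsupp.add_apply, Finsupp.single_apply, hv', Finsupp.tsub_apply]
      rcases eq_or_ne s u with rfl | hus
      · simp; omega
      · simp [hus]
    have hdeg' : v'.degree = w + 1 := by
      have h1 : (Finsupp.single s 1 : σ →₀ ℕ).degree = 1 := by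
        simp [Finsupp.degree_single]
      have hd : v.degree = (Finsupp.single s 1 : σ →₀ ℕ).degree + v'.degree := by
        conv_lhs => rw [← hsplit]
        simp only [Finsupp.degree_eq_weight_one, map_add]
      omega
    have hmono : (monomial v) (coeff v m) = X s * (monomial v') (coeff v m) := by
      rw [← hsplit, monomial_single_add, pow_one]
    have hm' : ((monomial v') (coeff v m)).IsHomogeneous (w + 1) :=
      isHomogeneous_monomial _ hdeg'
    rw [hmono, Derivation.leibniz, smul_eq_mul, smul_eq_mul, Q_X]
    refine add_mem (X_mul_mem_E s (ih _ hm')) ?_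
    refine Submodule.subset_span ⟨(monomial v') (coeff v m), X s ^ 2 ^ i, hm', ?_⟩
    rw [← pow_mul, ← pow_succ]

lemma Q_prod (i : ℕ) (T : Finset σ) :
    Qder σ i (∏ s ∈ T, X s) =
      ∑ s ∈ T, (∏ u ∈ T.erase s, X u) * X s ^ 2 ^ (i + 1) := by
  induction T using Finset.induction_on with
  | empty => simp
  | @insert a T ha ih =>
    rw [Finset.prod_insert ha, Derivation.leibniz, smul_eq_mul, smul_eq_mul, ih,
      Q_X, Finset.sum_insert ha, Finset.erase_insert ha, Finset.mul_sum]
    rw [add_comm]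
    congr 1
    refine Finset.sum_congr rfl fun s hs => ?_
    have hsa : s ≠ a := fun h => ha (h ▸ hs)
    rw [Finset.erase_insert_of_ne (Ne.symm hsa), Finset.prod_insert (fun h => ha (Finset.mem_of_mem_erase h))]
    ring

end Stmt14Aux

/-- Over `𝔽₂`: the Milnor derivation `Q_i` is `Φ S^*(W)`-linear, decreases the Frobenius
filtration by exactly one, and the induced map on filtration quotients
`Λ^t(W) ⊗ S^*(W) → Λ^(t-1)(W) ⊗ S^*(W)` is the Koszul differential `τ_i`: on the
generators `x_1⋯x_t·g²` of `f_t` it is given by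
`Q_i((∏_{s∈T} x_s)·g²) = Σ_{s∈T} (∏_{u∈T∖s} x_u)·(x_s^(2^i)·g)²`. -/
theorem stmt14 (σ : Type) [Fintype σ] [DecidableEq σ] (i : ℕ) :
    (∀ g p : MvPolynomial σ (ZMod 2), Qder σ i (g ^ 2 * p) = g ^ 2 * Qder σ i p) ∧
    (∀ t : ℕ, ∀ p ∈ frobFilt σ t, Qder σ i p ∈ frobFiltPred σ t) ∧
    (∀ (T : Finset σ) (g : MvPolynomial σ (ZMod 2)),
      Qder σ i ((∏ s ∈ T, X s) * g ^ 2) =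
        ∑ s ∈ T, (∏ u ∈ T.erase s, X u) * (X s ^ 2 ^ i * g) ^ 2) := by
  refine ⟨Stmt14Aux.Q_sq_mul, ?_, ?_⟩
  · intro t p hp
    induction hp using Submodule.span_induction with
    | mem q hq =>
      obtain ⟨u, hu, m, g, hm, rfl⟩ := hq
      rw [mul_comm, Stmt14Aux.Q_sq_mul]
      cases u with
      | zero => rw [Stmt14Aux.Q_hom0 hm, mul_zero]; exact zero_mem _
      | succ w =>
        obtain ⟨t', rfl⟩ : ∃ t', t = t' + 1 := ⟨t - 1, by omega⟩
        exact Stmt14Aux.sq_mul_mem_frob (by omega) g (Stmt14Aux.Q_hom_succ w m hm)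
    | zero => exact zero_mem _
    | add q r _ _ hq hr => rw [map_add]; exact add_mem hq hr
    | smul c q _ hq => rw [Derivation.map_smul]; exact Submodule.smul_mem _ _ hq
  · intro T g
    rw [mul_comm, Stmt14Aux.Q_sq_mul, Stmt14Aux.Q_prod, Finset.mul_sum]
    refine Finset.sum_congr rfl fun s _ => ?_
    rw [mul_pow, ← pow_mul, ← pow_succ]
    ring
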